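/- Let H be a Hopf algebra with coproduct Δ and antipode S, and define the adjoint action Ad(x)(y) = x_{(1)} y S(x_{(2)}). Let B ⊆ H be a subalgebra, K a group-like element of H, and suppose: (i) Ad(y)(b) ∈ B for all y in a sub-Hopf-algebra H_X ⊆ H and b ∈ B, and (ii) H_X K ⊆ B (i.e., y K ∈ B for all y ∈ H_X). Then for any x ∈ B, y ∈ H_X, one has Ad(y)(x K) K^{-1} ∈ B, where K^{-1} is the inverse of K. -/

import Mathlib

open scoped TensorProduct

/-- The adjoint action `Ad(x)(y) = x₍₁₎ y S(x₍₂₎)` of a Hopf algebra on itself. -/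
noncomputable def adAct (k : Type*) {H : Type*} [CommRing k] [Ring H] [HopfAlgebra k H]
    (x y : H) : H :=
  TensorProduct.lift
    (LinearMap.mk₂ k (fun a b => a * y * (HopfAlgebra.antipode (R := k) b))
      (fun a a' b => by simp [add_mul])
      (fun c a b => by simp [Algebra.smul_mul_assoc])
      (fun a b b' => by simp [mul_add])
      (fun c a b => by simp [Algebra.mul_smul_comm]))
    (Coalgebra.comul (R := k) x)

section Aux

variable (k : Type*) {H : Type*} [CommRing k] [Ring H] [HopfAlgebra k H]

open TensorProduct HopfAlgebra Coalgebra

/-- The bilinear map underlying `adAct`. -/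
noncomputable def adBil (z : H) : H →ₗ[k] H →ₗ[k] H :=
  LinearMap.mk₂ k (fun a b => a * z * (HopfAlgebra.antipode (R := k) b))
    (fun a a' b => by simp [add_mul])
    (fun c a b => by simp [Algebra.smul_mul_assoc])
    (fun a b b' => by simp [mul_add])
    (fun c a b => by simp [Algebra.mul_smul_comm])

lemma adAct_eq_lift (a z : H) :
    adAct k a z = TensorProduct.lift (adBil k z) (Coalgebra.comul (R := k) a) := rfl

/-- `adAct` as a linear map in the first argument. -/
noncomputable def adL (z : H) : H →ₗ[k] H :=
  TensorProduct.lift (adBil k z) ∘ₗ Coalgebra.comul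

lemma adL_apply (a z : H) : adL k z a = adAct k a z := rfl

lemma adAct_repr {a : H} {ι : Type*} (r : Coalgebra.Repr k a ι) (z : H) :
    adAct k a z = ∑ i ∈ r.index,
      r.left i * z * HopfAlgebra.antipode (R := k) (r.right i) := by
  rw [adAct_eq_lift, ← r.eq, map_sum]
  simp [adBil]

/-- The trilinear map `u ⊗ (v ⊗ w) ↦ S(u) * (v * K * S(w))`. -/
noncomputable def lamMap (K : H) : H ⊗[k] (H ⊗[k] H) →ₗ[k] H :=
  LinearMap.mul' k H ∘ₗ
    TensorProduct.map (HopfAlgebra.antipode (R := k)) (TensorProduct.lift (adBil k K))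

lemma lamMap_tmul (K u v w : H) :
    lamMap k K (u ⊗ₜ[k] (v ⊗ₜ[k] w)) =
      HopfAlgebra.antipode (R := k) u * (v * K * HopfAlgebra.antipode (R := k) w) := by
  simp [lamMap, adBil]

/-- The trilinear map `u ⊗ (v ⊗ w) ↦ (u * x) * (S(v) * Ad(w)(K))`. -/
noncomputable def phiMap (x K : H) : H ⊗[k] (H ⊗[k] H) →ₗ[k] H :=
  LinearMap.mul' k H ∘ₗ
    TensorProduct.map (LinearMap.mulRight k x)
      (LinearMap.mul' k H ∘ₗ
        TensorProduct.map (HopfAlgebra.antipode (R := k)) (adL k K))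

lemma phiMap_tmul (x K u v w : H) :
    phiMap k x K (u ⊗ₜ[k] (v ⊗ₜ[k] w)) =
      (u * x) * (HopfAlgebra.antipode (R := k) v * adAct k w K) := by
  simp [phiMap, adL_apply]

/-- Key Sweedler computation: `∑ S(b₍₁₎) * Ad(b₍₂₎)(K) = K * S(b)`. -/
lemma theta (K : H) {b : H} {ι : Type*} (r : Coalgebra.Repr k b ι) :
    ∑ i ∈ r.index,
      HopfAlgebra.antipode (R := k) (r.left i) * adAct k (r.right i) K =
      K * HopfAlgebra.antipode (R := k) b := by
  have key := congrArg (lamMap k K)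
    (Coalgebra.sum_tmul_tmul_eq r (fun i => Coalgebra.Repr.arbitrary k (r.left i))
      (fun i => Coalgebra.Repr.arbitrary k (r.right i)))
  simp only [map_sum, lamMap_tmul] at key
  calc
    ∑ i ∈ r.index, HopfAlgebra.antipode (R := k) (r.left i) * adAct k (r.right i) K
      = ∑ i ∈ r.index, ∑ j ∈ (Coalgebra.Repr.arbitrary k (r.right i)).index,
          HopfAlgebra.antipode (R := k) (r.left i) *
            ((Coalgebra.Repr.arbitrary k (r.right i)).left j * K *
              HopfAlgebra.antipode (R := k) ((Coalgebra.Repr.arbitrary k (r.right i)).right j)) := by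
        refine Finset.sum_congr rfl fun i _ => ?_
        rw [adAct_repr k (Coalgebra.Repr.arbitrary k (r.right i)) K, Finset.mul_sum]
    _ = ∑ i ∈ r.index, ∑ j ∈ (Coalgebra.Repr.arbitrary k (r.left i)).index,
          HopfAlgebra.antipode (R := k) ((Coalgebra.Repr.arbitrary k (r.left i)).left j) *
            ((Coalgebra.Repr.arbitrary k (r.left i)).right j * K *
              HopfAlgebra.antipode (R := k) (r.right i)) := key.symm
    _ = ∑ i ∈ r.index,
          Coalgebra.counit (R := k) (r.left i) •
            (K * HopfAlgebra.antipode (R := k) (r.right i)) := by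
        refine Finset.sum_congr rfl fun i _ => ?_
        calc
          ∑ j ∈ (Coalgebra.Repr.arbitrary k (r.left i)).index,
              HopfAlgebra.antipode (R := k) ((Coalgebra.Repr.arbitrary k (r.left i)).left j) *
                ((Coalgebra.Repr.arbitrary k (r.left i)).right j * K *
                  HopfAlgebra.antipode (R := k) (r.right i))
            = ∑ j ∈ (Coalgebra.Repr.arbitrary k (r.left i)).index,
                (HopfAlgebra.antipode (R := k) ((Coalgebra.Repr.arbitrary k (r.left i)).left j) *
                  (Coalgebra.Repr.arbitrary k (r.left i)).right j) *
                (K * HopfAlgebra.antipode (R := k) (r.right i)) := by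
              refine Finset.sum_congr rfl fun j _ => ?_
              simp only [mul_assoc]
          _ = (∑ j ∈ (Coalgebra.Repr.arbitrary k (r.left i)).index,
                HopfAlgebra.antipode (R := k) ((Coalgebra.Repr.arbitrary k (r.left i)).left j) *
                  (Coalgebra.Repr.arbitrary k (r.left i)).right j) *
                (K * HopfAlgebra.antipode (R := k) (r.right i)) := by
              rw [Finset.sum_mul]
          _ = Coalgebra.counit (R := k) (r.left i) •
                (K * HopfAlgebra.antipode (R := k) (r.right i)) := by
              rw [HopfAlgebra.sum_antipode_mul_eq_smul]
              rw [smul_mul_assoc, one_mul]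
    _ = K * HopfAlgebra.antipode (R := k) b := by
        have h := Coalgebra.sum_counit_tmul_eq (R := k) r
        have h2 := congrArg
          (((LinearMap.mulLeft k K).comp (HopfAlgebra.antipode (R := k))).comp
            (TensorProduct.lid k H).toLinearMap) h
        simp only [map_sum, map_smul, LinearMap.coe_comp, Function.comp_apply,
          LinearEquiv.coe_coe, TensorProduct.lid_tmul, LinearMap.mulLeft_apply,
          one_smul] at h2
        exact h2

/-- Key identity: `Ad(y)(xK) = ∑ Ad(y₍₁₎)(x) * Ad(y₍₂₎)(K)`. -/
lemma adAct_mul_split (x K : H) {y : H} {ι : Type*} (r : Coalgebra.Repr k y ι) :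
    adAct k y (x * K) =
      ∑ i ∈ r.index, adAct k (r.left i) x * adAct k (r.right i) K := by
  have key := congrArg (phiMap k x K)
    (Coalgebra.sum_tmul_tmul_eq r (fun i => Coalgebra.Repr.arbitrary k (r.left i))
      (fun i => Coalgebra.Repr.arbitrary k (r.right i)))
  simp only [map_sum, phiMap_tmul] at key
  calc
    adAct k y (x * K)
      = ∑ i ∈ r.index, r.left i * (x * K) * HopfAlgebra.antipode (R := k) (r.right i) := by
        rw [adAct_repr k r (x * K)]
    _ = ∑ i ∈ r.index, (r.left i * x) *
          (K * HopfAlgebra.antipode (R := k) (r.right i)) := by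
        refine Finset.sum_congr rfl fun i _ => ?_
        simp only [mul_assoc]
    _ = ∑ i ∈ r.index, (r.left i * x) *
          (∑ j ∈ (Coalgebra.Repr.arbitrary k (r.right i)).index,
            HopfAlgebra.antipode (R := k) ((Coalgebra.Repr.arbitrary k (r.right i)).left j) *
              adAct k ((Coalgebra.Repr.arbitrary k (r.right i)).right j) K) := by
        refine Finset.sum_congr rfl fun i _ => ?_
        rw [theta k K (Coalgebra.Repr.arbitrary k (r.right i))]
    _ = ∑ i ∈ r.index, ∑ j ∈ (Coalgebra.Repr.arbitrary k (r.right i)).index,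
          (r.left i * x) *
            (HopfAlgebra.antipode (R := k) ((Coalgebra.Repr.arbitrary k (r.right i)).left j) *
              adAct k ((Coalgebra.Repr.arbitrary k (r.right i)).right j) K) := by
        refine Finset.sum_congr rfl fun i _ => ?_
        rw [Finset.mul_sum]
    _ = ∑ i ∈ r.index, ∑ j ∈ (Coalgebra.Repr.arbitrary k (r.left i)).index,
          ((Coalgebra.Repr.arbitrary k (r.left i)).left j * x) *
            (HopfAlgebra.antipode (R := k) ((Coalgebra.Repr.arbitrary k (r.left i)).right j) *
              adAct k (r.right i) K) := key.symm
    _ = ∑ i ∈ r.index, adAct k (r.left i) x * adAct k (r.right i) K := by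
        refine Finset.sum_congr rfl fun i _ => ?_
        rw [adAct_repr k (Coalgebra.Repr.arbitrary k (r.left i)) x, Finset.sum_mul]
        refine Finset.sum_congr rfl fun j _ => ?_
        simp only [mul_assoc]

end Aux

theorem adjoint_action_coideal_stability
    (k H : Type*) [Field k] [Ring H] [HopfAlgebra k H]
    (B HX : Subalgebra k H) (K Kinv : H)
    (hKgrp : Coalgebra.comul (R := k) K = K ⊗ₜ[k] K)
    (hK1 : K * Kinv = 1) (hK2 : Kinv * K = 1)
    (hHXcomul : ∀ y ∈ HX, Coalgebra.comul (R := k) y ∈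
      LinearMap.range (TensorProduct.map HX.val.toLinearMap HX.val.toLinearMap))
    (hHXantipode : ∀ y ∈ HX, HopfAlgebra.antipode (R := k) y ∈ HX)
    (hHXB : HX ≤ B)
    (hKnorm : ∀ y ∈ HX, K * y * Kinv ∈ HX)
    (hyp_i : ∀ y ∈ HX, ∀ b ∈ B, adAct k y b ∈ B)
    (hyp_ii : ∀ y ∈ HX, y * K ∈ B) :
    ∀ x ∈ B, ∀ y ∈ HX, adAct k y (x * K) * Kinv ∈ B := by
  -- a `Repr` with both legs in `HX`, for any element of `HX`
  have mkRepr : ∀ b ∈ HX, ∃ r : Coalgebra.Repr k b (HX × HX),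
      (∀ i ∈ r.index, r.left i ∈ HX) ∧ (∀ i ∈ r.index, r.right i ∈ HX) := by
    intro b hb
    obtain ⟨t, ht⟩ := hHXcomul b hb
    obtain ⟨s, hs⟩ := TensorProduct.exists_finset (R := k) t
    refine ⟨⟨s, fun p => (p.1 : H), fun p => (p.2 : H), ?_⟩, fun i _ => i.1.2, fun i _ => i.2.2⟩
    rw [← ht, hs, map_sum]
    simp
  have hBK : ∀ b ∈ HX, adAct k b K * Kinv ∈ B := by
    intro b hb
    obtain ⟨r, hl, hr⟩ := mkRepr b hb
    rw [adAct_repr k r K, Finset.sum_mul]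
    refine Subalgebra.sum_mem B fun i hi => ?_
    have h1 : r.left i * K * HopfAlgebra.antipode (R := k) (r.right i) * Kinv =
        r.left i * (K * HopfAlgebra.antipode (R := k) (r.right i) * Kinv) := by
      simp only [mul_assoc]
    rw [h1]
    exact hHXB (HX.mul_mem (hl i hi) (hKnorm _ (hHXantipode _ (hr i hi))))
  intro x hx y hy
  obtain ⟨r, hl, hr⟩ := mkRepr y hy
  rw [adAct_mul_split k x K r, Finset.sum_mul]
  refine Subalgebra.sum_mem B fun i hi => ?_
  rw [mul_assoc]
  exact B.mul_mem (hyp_i _ (hl i hi) x hx) (hBK _ (hr i hi))
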